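/- If real numbers f_1,f_2,f_3,f_4 satisfy 3(f_1 f_3 + f_2 f_4) − (f_2² + f_3²) = 0, and g_1,...,g_5 are defined by g_1 = −(5/18)(9f_1²+f_2²), g_2 = −(10/9)(3f_1+f_3)f_2, g_3 = −(5/3)(f_2²+f_3²), g_4 = −(10/9)(3f_4+f_2)f_3, g_5 = −(5/18)(9f_4²+f_3²), then the three identities 9g_2² + 4g_3² − 24g_1g_3 − 9g_2g_4 = 0, 9g_4² + 4g_3² − 24g_3g_5 − 9g_2g_4 = 0, and (g_2+g_4)g_3 − 6(g_1g_4 + g_2g_5) = 0 all hold. -/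
import Mathlib

/-- The cubic Bertrand–Darboux condition implies the quartic Bertrand–Darboux condition
for the associated quartic coefficients. -/
theorem stmt9 (f₁ f₂ f₃ f₄ : ℝ)
    (hBD : 3 * (f₁ * f₃ + f₂ * f₄) - (f₂ ^ 2 + f₃ ^ 2) = 0)
    (g₁ g₂ g₃ g₄ g₅ : ℝ)
    (hg₁ : g₁ = -(5 / 18) * (9 * f₁ ^ 2 + f₂ ^ 2))
    (hg₂ : g₂ = -(10 / 9) * (3 * f₁ + f₃) * f₂)
    (hg₃ : g₃ = -(5 / 3) * (f₂ ^ 2 + f₃ ^ 2))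
    (hg₄ : g₄ = -(10 / 9) * (3 * f₄ + f₂) * f₃)
    (hg₅ : g₅ = -(5 / 18) * (9 * f₄ ^ 2 + f₃ ^ 2)) :
    9 * g₂ ^ 2 + 4 * g₃ ^ 2 - 24 * g₁ * g₃ - 9 * g₂ * g₄ = 0 ∧
    9 * g₄ ^ 2 + 4 * g₃ ^ 2 - 24 * g₃ * g₅ - 9 * g₂ * g₄ = 0 ∧
    (g₂ + g₄) * g₃ - 6 * (g₁ * g₄ + g₂ * g₅) = 0 := by
  subst hg₁ hg₂ hg₃ hg₄ hg₅
  refine ⟨?_, ?_, ?_⟩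
  · linear_combination (-(100/3) * f₁ * f₃ - (100/9) * f₃ ^ 2) * hBD
  · linear_combination (-(100/9) * f₂ ^ 2 - (100/3) * f₂ * f₄) * hBD
  · linear_combination (-(50/9) * f₁ * f₂ - (50/3) * f₁ * f₄ - (50/27) * f₂ * f₃ - (50/9) * f₃ * f₄) * hBD
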